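/- Let $M$ be a sparse paving matroid of rank $r$ on ground set $E$, and let $k\ge 0$ be an integer with $\min\{r, |E|-r\}\ge\binom{2k}{k}$. Then for every basis $B$ of $M$, there exist sets $Y\subseteq B\subseteq X\subseteq E$ such that the minor $(M|X)/Y$ is isomorphic to the uniform matroid $U_{k,2k}$. -/

import Mathlib

/-- A matroid `M` is sparse paving of rank `r` if every base has `r` elements and any two
distinct non-base `r`-subsets of the ground set intersect in at most `r - 2` elements. -/
def IsSparsePaving {α : Type*} (M : Matroid α) (r : ℕ) : Prop :=
  (∀ B, M.IsBase B → B.ncard = r) ∧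
  ∀ H₁ H₂ : Set α, H₁ ⊆ M.E → H₂ ⊆ M.E → H₁.ncard = r → H₂.ncard = r →
    ¬ M.IsBase H₁ → ¬ M.IsBase H₂ → H₁ ≠ H₂ → (H₁ ∩ H₂).ncard ≤ r - 2

open Finset in
private lemma sp_binom_aux : ∀ k : ℕ, ∀ i < k,
    Nat.choose (2*i+1) (i+1) + (i+1) ≤ Nat.choose (2*k) k := by
  intro k
  induction k with
  | zero => intro i h; omega
  | succ k ih =>
    intro i hi
    have hmid : k + 1 ≤ (2*k+1).choose k := by
      have h1 := Nat.choose_le_middle 1 (2*k+1)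
      rw [show (2*k+1)/2 = k by omega, Nat.choose_one_right] at h1
      omega
    have hsymm : (2*k+1).choose k = (2*k+1).choose (k+1) := by
      have h := Nat.choose_symm (n := 2*k+1) (k := k+1) (by omega)
      rw [show 2*k+1-(k+1) = k by omega] at h
      omega
    have hpas : (2*(k+1)).choose (k+1) = (2*k+1).choose k + (2*k+1).choose (k+1) := by
      rw [show 2*(k+1) = (2*k+1)+1 by ring]
      exact Nat.choose_succ_succ (2*k+1) k
    rcases Nat.lt_succ_iff_lt_or_eq.mp hi with h | h
    · have h1 := ih i h
      have h2 : (2*k+1).choose (k+1) = (2*k).choose k + (2*k).choose (k+1) := by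
        rw [show 2*k+1 = (2*k)+1 by ring]
        exact Nat.choose_succ_succ (2*k) k
      omega
    · subst h
      omega

private lemma sp_k_le_choose (k : ℕ) : k ≤ Nat.choose (2*k) k ∧ (1 ≤ k → 2 ≤ Nat.choose (2*k) k) := by
  rcases Nat.eq_zero_or_pos k with h | h
  · subst h; simp
  · have h1 := Nat.choose_le_middle 1 (2*k)
    rw [show (2*k)/2 = k by omega, Nat.choose_one_right] at h1
    omega

/-- all swaps of `T ⊆ P` out of `B` and `U ⊆ Q` into `B` are bases -/
def GoodPair {α : Type*} (M : Matroid α) (B : Set α) (P Q : Finset α) : Prop :=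
  ∀ T U : Finset α, T ⊆ P → U ⊆ Q → T.card = U.card → M.IsBase ((B \ ↑T) ∪ ↑U)

private lemma sp_swap_card {α : Type*} {M : Matroid α} {B : Set α} {r : ℕ}
    (hfin : M.E.Finite) (hBE : B ⊆ M.E) (hBcard : B.ncard = r)
    (T U : Finset α) (hT : ↑T ⊆ B) (hU : ↑U ⊆ M.E \ B) :
    ((B \ ↑T) ∪ ↑U) ⊆ M.E ∧ ((B \ ↑T) ∪ ↑U).ncard = r - T.card + U.card := by
  have hBfin : B.Finite := hfin.subset hBE
  constructor
  · rintro x (hx | hx)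
    · exact hBE hx.1
    · exact (hU hx).1
  · have hdisj : Disjoint (B \ (↑T : Set α)) (↑U : Set α) := by
      rw [Set.disjoint_right]
      intro a ha
      exact fun hc => (hU ha).2 hc.1
    rw [Set.ncard_union_eq hdisj (hBfin.diff) U.finite_toSet,
      Set.ncard_diff hT (T.finite_toSet), Set.ncard_coe_finset, Set.ncard_coe_finset, hBcard]

private lemma sp_close_eq {α : Type*} {M : Matroid α} {r : ℕ}
    (hsp : IsSparsePaving M r) (hr : 2 ≤ r) {Z₁ Z₂ : Set α}
    (h1 : Z₁ ⊆ M.E) (h2 : Z₂ ⊆ M.E) (c1 : Z₁.ncard = r) (c2 : Z₂.ncard = r)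
    (n1 : ¬ M.IsBase Z₁) (n2 : ¬ M.IsBase Z₂) (hint : r - 1 ≤ (Z₁ ∩ Z₂).ncard) :
    Z₁ = Z₂ := by
  by_contra hne
  have := hsp.2 Z₁ Z₂ h1 h2 c1 c2 n1 n2 hne
  omega

private lemma sp_cancel {α : Type*} [DecidableEq α] {P Q : Finset α} (hPQ : Disjoint P Q)
    {T U : Finset α} (hT : T ⊆ P) (hU : U ⊆ Q) :
    ((P \ T) ∪ U) ∩ P = P \ T ∧ ((P \ T) ∪ U) \ P = U := by
  constructor
  · ext a
    simp only [Finset.mem_inter, Finset.mem_union, Finset.mem_sdiff]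
    constructor
    · rintro ⟨h | h, hp⟩
      · exact h
      · exact absurd hp (Finset.disjoint_right.mp hPQ (hU h))
    · intro h; exact ⟨Or.inl h, h.1⟩
  · ext a
    simp only [Finset.mem_sdiff, Finset.mem_union]
    constructor
    · rintro ⟨h | h, hp⟩
      · exact absurd h.1 hp
      · exact h
    · intro h; exact ⟨Or.inr h, Finset.disjoint_right.mp hPQ (hU h)⟩

private lemma sp_stepY {α : Type*} [DecidableEq α] {M : Matroid α} {r : ℕ} (hfin : M.E.Finite)
    (hsp : IsSparsePaving M r) {B : Set α} (hBE : B ⊆ M.E) (hBcard : B.ncard = r)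
    {P Q : Finset α} {i : ℕ} (hP : ↑P ⊆ B) (hQ : ↑Q ⊆ M.E \ B)
    (hPc : P.card = i) (hQc : Q.card = i)
    (hgood : GoodPair M B P Q)
    (hnum : Nat.choose (2*i) (i+1) + i < r) :
    ∃ y, y ∈ B ∧ y ∉ P ∧ GoodPair M B (insert y P) Q := by
  classical
  have hBfin : B.Finite := hfin.subset hBE
  set Bf : Finset α := hBfin.toFinset with hBfdef
  have hBfcoe : (↑Bf : Set α) = B := hBfin.coe_toFinset
  have hBfcard : Bf.card = r := by rw [← Set.ncard_coe_finset, hBfcoe, hBcard]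
  have hPQ : Disjoint P Q := by
    rw [Finset.disjoint_left]
    intro a haP haQ
    exact (hQ haQ).2 (hP haP)
  have hPBf : P ⊆ Bf := by rw [← Finset.coe_subset, hBfcoe]; exact hP
  set badp : α → Prop := fun y => ∃ T U : Finset α, T ⊆ P ∧ U ⊆ Q ∧ U.card = T.card + 1 ∧
    ¬ M.IsBase ((B \ ↑(insert y T)) ∪ ↑U) with hbadp
  set Bad : Finset α := (Bf \ P).filter badp with hBad
  have hwit : ∀ y, badp y → ∃ TU : Finset α × Finset α, TU.1 ⊆ P ∧ TU.2 ⊆ Q ∧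
      TU.2.card = TU.1.card + 1 ∧ ¬ M.IsBase ((B \ ↑(insert y TU.1)) ∪ ↑TU.2) := by
    rintro y ⟨T, U, h1, h2, h3, h4⟩
    exact ⟨(T, U), h1, h2, h3, h4⟩
  set F : α → Finset α :=
    fun y => if h : badp y then (P \ (hwit y h).choose.1) ∪ (hwit y h).choose.2 else ∅ with hF
  have hFeq : ∀ y (h : badp y), F y = (P \ (hwit y h).choose.1) ∪ (hwit y h).choose.2 :=
    fun y h => dif_pos h
  have hBadmem : ∀ y ∈ Bad, (y ∈ B ∧ y ∉ P) ∧ badp y := by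
    intro y hy
    rw [hBad, Finset.mem_filter, Finset.mem_sdiff] at hy
    exact ⟨⟨hBfin.mem_toFinset.mp hy.1.1, hy.1.2⟩, hy.2⟩
  have hmap : ∀ y ∈ Bad, F y ∈ (P ∪ Q).powersetCard (i+1) := by
    intro y hy
    obtain ⟨⟨hyB, hyP⟩, h⟩ := hBadmem y hy
    obtain ⟨hT, hU, hc, hnb⟩ := (hwit y h).choose_spec
    rw [hFeq y h, Finset.mem_powersetCard]
    constructor
    · exact Finset.union_subset (Finset.sdiff_subset.trans Finset.subset_union_left)
        (hU.trans Finset.subset_union_right)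
    · have hd : Disjoint (P \ (hwit y h).choose.1) (hwit y h).choose.2 :=
        Finset.disjoint_of_subset_left Finset.sdiff_subset (Finset.disjoint_of_subset_right hU hPQ)
      have h1 : (hwit y h).choose.1.card ≤ i := by rw [← hPc]; exact Finset.card_le_card hT
      have h2 : (hwit y h).choose.2.card ≤ i := by rw [← hQc]; exact Finset.card_le_card hU
      rw [Finset.card_union_of_disjoint hd, Finset.card_sdiff_of_subset hT, hPc]
      omega
  have hinj : Set.InjOn F ↑Bad := by
    intro y₁ hy₁' y₂ hy₂' heq
    have hy₁ := Finset.mem_coe.mp hy₁'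
    have hy₂ := Finset.mem_coe.mp hy₂'
    obtain ⟨⟨hyB₁, hyP₁⟩, h₁⟩ := hBadmem y₁ hy₁
    obtain ⟨⟨hyB₂, hyP₂⟩, h₂⟩ := hBadmem y₂ hy₂
    obtain ⟨hT₁, hU₁, hc₁, hnb₁⟩ := (hwit y₁ h₁).choose_spec
    obtain ⟨hT₂, hU₂, hc₂, hnb₂⟩ := (hwit y₂ h₂).choose_spec
    set T₁ := (hwit y₁ h₁).choose.1 with hT₁def
    set U₁ := (hwit y₁ h₁).choose.2 with hU₁def
    set T₂ := (hwit y₂ h₂).choose.1 with hT₂def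
    set U₂ := (hwit y₂ h₂).choose.2 with hU₂def
    rw [hFeq y₁ h₁, hFeq y₂ h₂] at heq
    have e1 : P \ T₁ = P \ T₂ := by
      have q1 := (sp_cancel hPQ hT₁ hU₁).1
      have q2 := (sp_cancel hPQ hT₂ hU₂).1
      rw [← q1, ← q2, heq]
    have eT : T₁ = T₂ := by
      have h := congrArg (fun s => P \ s) e1
      simpa [Finset.sdiff_sdiff_eq_self hT₁, Finset.sdiff_sdiff_eq_self hT₂] using h
    have eU : U₁ = U₂ := by
      have q1 := (sp_cancel hPQ hT₁ hU₁).2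
      have q2 := (sp_cancel hPQ hT₂ hU₂).2
      rw [← q1, ← q2, heq]
    by_contra hne
    rw [← eT, ← eU] at hnb₂
    have hUE₁ : (↑U₁ : Set α) ⊆ M.E \ B := (Finset.coe_subset.mpr hU₁).trans hQ
    have hyT₁ : y₁ ∉ T₁ := fun hc => hyP₁ (hT₁ hc)
    have hyT₂ : y₂ ∉ T₁ := fun hc => hyP₂ (hT₁ hc)
    have ht1 : T₁.card + 1 ≤ i := by
      have := Finset.card_le_card hU₁
      omega
    have hins₁ : (↑(insert y₁ T₁) : Set α) ⊆ B := by
      rw [Finset.coe_insert]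
      exact Set.insert_subset hyB₁ ((Finset.coe_subset.mpr hT₁).trans hP)
    have hins₂ : (↑(insert y₂ T₁) : Set α) ⊆ B := by
      rw [Finset.coe_insert]
      exact Set.insert_subset hyB₂ ((Finset.coe_subset.mpr hT₁).trans hP)
    have hz₁ := sp_swap_card hfin hBE hBcard (insert y₁ T₁) U₁ hins₁ hUE₁
    have hz₂ := sp_swap_card hfin hBE hBcard (insert y₂ T₁) U₁ hins₂ hUE₁
    have hci₁ : (insert y₁ T₁).card = T₁.card + 1 := Finset.card_insert_of_notMem hyT₁
    have hci₂ : (insert y₂ T₁).card = T₁.card + 1 := Finset.card_insert_of_notMem hyT₂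
    have hzc₁ : ((B \ ↑(insert y₁ T₁)) ∪ ↑U₁).ncard = r := by rw [hz₁.2, hci₁]; omega
    have hzc₂ : ((B \ ↑(insert y₂ T₁)) ∪ ↑U₁).ncard = r := by rw [hz₂.2, hci₂]; omega
    -- the common subset
    have hy12 : y₁ ∉ insert y₂ T₁ := by
      rw [Finset.mem_insert]; push_neg; exact ⟨hne, hyT₁⟩
    have hbig : (↑(insert y₁ (insert y₂ T₁)) : Set α) ⊆ B := by
      rw [Finset.coe_insert]
      exact Set.insert_subset hyB₁ hins₂
    have hS := sp_swap_card hfin hBE hBcard (insert y₁ (insert y₂ T₁)) U₁ hbig hUE₁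
    have hScard : ((B \ ↑(insert y₁ (insert y₂ T₁))) ∪ ↑U₁).ncard = r - 1 := by
      rw [hS.2, Finset.card_insert_of_notMem hy12, hci₂]
      omega
    have hsub : (B \ ↑(insert y₁ (insert y₂ T₁))) ∪ ↑U₁ ⊆
        ((B \ ↑(insert y₁ T₁)) ∪ ↑U₁) ∩ ((B \ ↑(insert y₂ T₁)) ∪ ↑U₁) := by
      apply Set.subset_inter
      · exact Set.union_subset_union_left _ (Set.diff_subset_diff_right
          (Finset.coe_subset.mpr (Finset.insert_subset_insert y₁ (Finset.subset_insert y₂ T₁))))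
      · exact Set.union_subset_union_left _ (Set.diff_subset_diff_right
          (Finset.coe_subset.mpr (Finset.subset_insert y₁ (insert y₂ T₁))))
    have hintfin : (((B \ ↑(insert y₁ T₁)) ∪ ↑U₁) ∩ ((B \ ↑(insert y₂ T₁)) ∪ ↑U₁)).Finite :=
      hfin.subset (Set.inter_subset_left.trans hz₁.1)
    have hint : r - 1 ≤ (((B \ ↑(insert y₁ T₁)) ∪ ↑U₁) ∩ ((B \ ↑(insert y₂ T₁)) ∪ ↑U₁)).ncard := by
      rw [← hScard]
      exact Set.ncard_le_ncard hsub hintfin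
    have hr2 : 2 ≤ r := by omega
    have heqZ := sp_close_eq hsp hr2 hz₁.1 hz₂.1 hzc₁ hzc₂ hnb₁ hnb₂ hint
    have hy2Z1 : y₂ ∈ (B \ ↑(insert y₁ T₁)) ∪ ↑U₁ := by
      left
      refine ⟨hyB₂, ?_⟩
      rw [Finset.coe_insert]
      rintro (h | h)
      · exact hne h.symm
      · exact hyT₂ h
    rw [heqZ] at hy2Z1
    rcases hy2Z1 with h | h
    · exact h.2 (by rw [Finset.coe_insert]; exact Or.inl rfl)
    · exact (hQ ((Finset.coe_subset.mpr hU₁) h)).2 hyB₂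
  have hcardBad : Bad.card ≤ Nat.choose (2*i) (i+1) := by
    have h1 := Finset.card_le_card_of_injOn F hmap hinj
    rwa [Finset.card_powersetCard, Finset.card_union_of_disjoint hPQ, hPc, hQc,
      show i + i = 2*i by ring] at h1
  have hpool : (Bf \ P).card = r - i := by rw [Finset.card_sdiff_of_subset hPBf, hBfcard, hPc]
  have hnsub : ¬ (Bf \ P ⊆ Bad) := by
    intro hsub
    have := Finset.card_le_card hsub
    omega
  obtain ⟨y, hy, hyBad⟩ := Finset.not_subset.mp hnsub
  rw [Finset.mem_sdiff] at hy
  refine ⟨y, hBfin.mem_toFinset.mp hy.1, hy.2, ?_⟩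
  intro T U hT hU hTU
  by_cases hyT : y ∈ T
  · have hT' : T.erase y ⊆ P := by
      intro a ha
      rcases Finset.mem_insert.mp (hT (Finset.mem_of_mem_erase ha)) with h | h
      · exact absurd h (Finset.ne_of_mem_erase ha)
      · exact h
    have hcU : U.card = (T.erase y).card + 1 := by
      have := Finset.card_erase_add_one hyT
      omega
    by_contra hnb
    have hb : badp y := ⟨T.erase y, U, hT', hU, hcU, by rwa [Finset.insert_erase hyT]⟩
    exact hyBad (by rw [hBad, Finset.mem_filter]; exact ⟨Finset.mem_sdiff.mpr hy, hb⟩)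
  · refine hgood T U ?_ hU hTU
    intro a ha
    rcases Finset.mem_insert.mp (hT ha) with h | h
    · subst h; exact absurd ha hyT
    · exact h

private lemma sp_stepX {α : Type*} [DecidableEq α] {M : Matroid α} {r : ℕ} (hfin : M.E.Finite)
    (hsp : IsSparsePaving M r) {B : Set α} (hBE : B ⊆ M.E) (hBcard : B.ncard = r)
    {P Q : Finset α} {i : ℕ} (hP : ↑P ⊆ B) (hQ : ↑Q ⊆ M.E \ B)
    (hPc : P.card = i + 1) (hQc : Q.card = i)
    (hgood : GoodPair M B P Q)
    (hnum : Nat.choose (2*i+1) i + i < M.E.ncard - r)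
    (hir : i + 1 ≤ r) (hr2 : 2 ≤ r) :
    ∃ x, x ∈ M.E ∧ x ∉ B ∧ x ∉ Q ∧ GoodPair M B P (insert x Q) := by
  classical
  have hBfin : B.Finite := hfin.subset hBE
  set Ef : Finset α := hfin.toFinset with hEfdef
  set Bf : Finset α := hBfin.toFinset with hBfdef
  have hEfcoe : (↑Ef : Set α) = M.E := hfin.coe_toFinset
  have hBfcoe : (↑Bf : Set α) = B := hBfin.coe_toFinset
  have hEfcard : Ef.card = M.E.ncard := by rw [← Set.ncard_coe_finset, hEfcoe]
  have hBfcard : Bf.card = r := by rw [← Set.ncard_coe_finset, hBfcoe, hBcard]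
  have hBfEf : Bf ⊆ Ef := by rw [← Finset.coe_subset, hBfcoe, hEfcoe]; exact hBE
  have hPQ : Disjoint P Q := by
    rw [Finset.disjoint_left]
    intro a haP haQ
    exact (hQ haQ).2 (hP haP)
  have hQEB : Q ⊆ Ef \ Bf := by
    intro a ha
    rw [Finset.mem_sdiff, hEfdef, hBfdef, hfin.mem_toFinset, hBfin.mem_toFinset]
    exact ⟨(hQ ha).1, (hQ ha).2⟩
  set badp : α → Prop := fun x => ∃ T U : Finset α, T ⊆ P ∧ U ⊆ Q ∧ T.card = U.card + 1 ∧
    ¬ M.IsBase ((B \ ↑T) ∪ ↑(insert x U)) with hbadp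
  set Bad : Finset α := ((Ef \ Bf) \ Q).filter badp with hBad
  have hwit : ∀ x, badp x → ∃ TU : Finset α × Finset α, TU.1 ⊆ P ∧ TU.2 ⊆ Q ∧
      TU.1.card = TU.2.card + 1 ∧ ¬ M.IsBase ((B \ ↑TU.1) ∪ ↑(insert x TU.2)) := by
    rintro x ⟨T, U, h1, h2, h3, h4⟩
    exact ⟨(T, U), h1, h2, h3, h4⟩
  set F : α → Finset α :=
    fun x => if h : badp x then (P \ (hwit x h).choose.1) ∪ (hwit x h).choose.2 else ∅ with hF
  have hFeq : ∀ x (h : badp x), F x = (P \ (hwit x h).choose.1) ∪ (hwit x h).choose.2 :=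
    fun x h => dif_pos h
  have hBadmem : ∀ x ∈ Bad, (x ∈ M.E ∧ x ∉ B ∧ x ∉ Q) ∧ badp x := by
    intro x hx
    rw [hBad, Finset.mem_filter, Finset.mem_sdiff, Finset.mem_sdiff] at hx
    refine ⟨⟨?_, ?_, hx.1.2⟩, hx.2⟩
    · exact hfin.mem_toFinset.mp hx.1.1.1
    · intro hc; exact hx.1.1.2 (hBfin.mem_toFinset.mpr hc)
  have hmap : ∀ x ∈ Bad, F x ∈ (P ∪ Q).powersetCard i := by
    intro x hx
    obtain ⟨⟨hxE, hxB, hxQ⟩, h⟩ := hBadmem x hx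
    obtain ⟨hT, hU, hc, hnb⟩ := (hwit x h).choose_spec
    rw [hFeq x h, Finset.mem_powersetCard]
    constructor
    · exact Finset.union_subset (Finset.sdiff_subset.trans Finset.subset_union_left)
        (hU.trans Finset.subset_union_right)
    · have hd : Disjoint (P \ (hwit x h).choose.1) (hwit x h).choose.2 :=
        Finset.disjoint_of_subset_left Finset.sdiff_subset (Finset.disjoint_of_subset_right hU hPQ)
      have h1 : (hwit x h).choose.1.card ≤ i + 1 := by rw [← hPc]; exact Finset.card_le_card hT
      have h2 : (hwit x h).choose.2.card ≤ i := by rw [← hQc]; exact Finset.card_le_card hU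
      rw [Finset.card_union_of_disjoint hd, Finset.card_sdiff_of_subset hT, hPc]
      omega
  have hinj : Set.InjOn F ↑Bad := by
    intro x₁ hx₁' x₂ hx₂' heq
    have hx₁ := Finset.mem_coe.mp hx₁'
    have hx₂ := Finset.mem_coe.mp hx₂'
    obtain ⟨⟨hxE₁, hxB₁, hxQ₁⟩, h₁⟩ := hBadmem x₁ hx₁
    obtain ⟨⟨hxE₂, hxB₂, hxQ₂⟩, h₂⟩ := hBadmem x₂ hx₂
    obtain ⟨hT₁, hU₁, hc₁, hnb₁⟩ := (hwit x₁ h₁).choose_spec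
    obtain ⟨hT₂, hU₂, hc₂, hnb₂⟩ := (hwit x₂ h₂).choose_spec
    set T₁ := (hwit x₁ h₁).choose.1 with hT₁def
    set U₁ := (hwit x₁ h₁).choose.2 with hU₁def
    set T₂ := (hwit x₂ h₂).choose.1 with hT₂def
    set U₂ := (hwit x₂ h₂).choose.2 with hU₂def
    rw [hFeq x₁ h₁, hFeq x₂ h₂] at heq
    have e1 : P \ T₁ = P \ T₂ := by
      have q1 := (sp_cancel hPQ hT₁ hU₁).1
      have q2 := (sp_cancel hPQ hT₂ hU₂).1
      rw [← q1, ← q2, heq]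
    have eT : T₁ = T₂ := by
      have h := congrArg (fun s => P \ s) e1
      simpa [Finset.sdiff_sdiff_eq_self hT₁, Finset.sdiff_sdiff_eq_self hT₂] using h
    have eU : U₁ = U₂ := by
      have q1 := (sp_cancel hPQ hT₁ hU₁).2
      have q2 := (sp_cancel hPQ hT₂ hU₂).2
      rw [← q1, ← q2, heq]
    by_contra hne
    rw [← eT, ← eU] at hnb₂
    have hTE : (↑T₁ : Set α) ⊆ B := (Finset.coe_subset.mpr hT₁).trans hP
    have hxU₁ : x₁ ∉ U₁ := fun hc => hxQ₁ (hU₁ hc)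
    have hxU₂ : x₂ ∉ U₁ := fun hc => hxQ₂ (hU₁ hc)
    have hins₁ : (↑(insert x₁ U₁) : Set α) ⊆ M.E \ B := by
      rw [Finset.coe_insert]
      exact Set.insert_subset ⟨hxE₁, hxB₁⟩ ((Finset.coe_subset.mpr hU₁).trans hQ)
    have hins₂ : (↑(insert x₂ U₁) : Set α) ⊆ M.E \ B := by
      rw [Finset.coe_insert]
      exact Set.insert_subset ⟨hxE₂, hxB₂⟩ ((Finset.coe_subset.mpr hU₁).trans hQ)
    have hUE₁ : (↑U₁ : Set α) ⊆ M.E \ B := (Finset.coe_subset.mpr hU₁).trans hQ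
    have hz₁ := sp_swap_card hfin hBE hBcard T₁ (insert x₁ U₁) hTE hins₁
    have hz₂ := sp_swap_card hfin hBE hBcard T₁ (insert x₂ U₁) hTE hins₂
    have hci₁ : (insert x₁ U₁).card = U₁.card + 1 := Finset.card_insert_of_notMem hxU₁
    have hci₂ : (insert x₂ U₁).card = U₁.card + 1 := Finset.card_insert_of_notMem hxU₂
    have ht1 : T₁.card ≤ i + 1 := by
      have := Finset.card_le_card hT₁
      omega
    have hzc₁ : ((B \ ↑T₁) ∪ ↑(insert x₁ U₁)).ncard = r := by rw [hz₁.2, hci₁]; omega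
    have hzc₂ : ((B \ ↑T₁) ∪ ↑(insert x₂ U₁)).ncard = r := by rw [hz₂.2, hci₂]; omega
    have hS := sp_swap_card hfin hBE hBcard T₁ U₁ hTE hUE₁
    have hScard : ((B \ ↑T₁) ∪ ↑U₁).ncard = r - 1 := by
      rw [hS.2]
      omega
    have hsub : (B \ ↑T₁) ∪ ↑U₁ ⊆
        ((B \ ↑T₁) ∪ ↑(insert x₁ U₁)) ∩ ((B \ ↑T₁) ∪ ↑(insert x₂ U₁)) := by
      apply Set.subset_inter
      · exact Set.union_subset_union_right _ (Finset.coe_subset.mpr (Finset.subset_insert x₁ U₁))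
      · exact Set.union_subset_union_right _ (Finset.coe_subset.mpr (Finset.subset_insert x₂ U₁))
    have hintfin : (((B \ ↑T₁) ∪ ↑(insert x₁ U₁)) ∩ ((B \ ↑T₁) ∪ ↑(insert x₂ U₁))).Finite :=
      hfin.subset (Set.inter_subset_left.trans hz₁.1)
    have hint : r - 1 ≤ (((B \ ↑T₁) ∪ ↑(insert x₁ U₁)) ∩ ((B \ ↑T₁) ∪ ↑(insert x₂ U₁))).ncard := by
      rw [← hScard]
      exact Set.ncard_le_ncard hsub hintfin
    have heqZ := sp_close_eq hsp hr2 hz₁.1 hz₂.1 hzc₁ hzc₂ hnb₁ hnb₂ hint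
    have hx2Z2 : x₂ ∈ (B \ ↑T₁) ∪ ↑(insert x₂ U₁) := by
      right
      rw [Finset.coe_insert]
      exact Or.inl rfl
    rw [← heqZ] at hx2Z2
    rcases hx2Z2 with h | h
    · exact hxB₂ h.1
    · rw [Finset.coe_insert] at h
      rcases h with h | h
      · exact hne (h : x₂ = x₁).symm
      · exact hxU₂ h
  have hcardBad : Bad.card ≤ Nat.choose (2*i+1) i := by
    have h1 := Finset.card_le_card_of_injOn F hmap hinj
    rwa [Finset.card_powersetCard, Finset.card_union_of_disjoint hPQ, hPc, hQc,
      show i + 1 + i = 2*i+1 by ring] at h1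
  have hpool : ((Ef \ Bf) \ Q).card = M.E.ncard - r - i := by
    rw [Finset.card_sdiff_of_subset hQEB, Finset.card_sdiff_of_subset hBfEf, hEfcard, hBfcard, hQc]
  have hnsub : ¬ ((Ef \ Bf) \ Q ⊆ Bad) := by
    intro hsub
    have := Finset.card_le_card hsub
    omega
  obtain ⟨x, hx, hxBad⟩ := Finset.not_subset.mp hnsub
  rw [Finset.mem_sdiff, Finset.mem_sdiff] at hx
  refine ⟨x, hfin.mem_toFinset.mp hx.1.1, fun hc => hx.1.2 (hBfin.mem_toFinset.mpr hc), hx.2, ?_⟩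
  intro T U hT hU hTU
  by_cases hxU : x ∈ U
  · have hU' : U.erase x ⊆ Q := by
      intro a ha
      rcases Finset.mem_insert.mp (hU (Finset.mem_of_mem_erase ha)) with h | h
      · exact absurd h (Finset.ne_of_mem_erase ha)
      · exact h
    have hcT : T.card = (U.erase x).card + 1 := by
      have := Finset.card_erase_add_one hxU
      omega
    by_contra hnb
    have hb : badp x := ⟨T, U.erase x, hT, hU', hcT, by rwa [Finset.insert_erase hxU]⟩
    exact hxBad (by rw [hBad, Finset.mem_filter]; exact
      ⟨by rw [Finset.mem_sdiff, Finset.mem_sdiff]; exact hx, hb⟩)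
  · refine hgood T U hT ?_ hTU
    intro a ha
    rcases Finset.mem_insert.mp (hU ha) with h | h
    · subst h; exact absurd ha hxU
    · exact h


/-- Theorem 5.7: if `M` is sparse paving of rank `r` with `min{r, |E| - r} ≥ C(2k, k)`,
then for every base `B` there is a `B`-minor `(M|X)/Y` isomorphic to `U_{k,2k}`, i.e.
sets `Y ⊆ B ⊆ X ⊆ E` such that `|X \ Y| = 2k` and the bases of `(M|X)/Y` — the sets
`B' ⊆ X \ Y` with `B' ∪ Y` a base of `M` — are exactly the `k`-subsets of `X \ Y`. -/
theorem stmt_10 {α : Type*} (M : Matroid α) (hfin : M.E.Finite) (r k : ℕ)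
    (hsp : IsSparsePaving M r)
    (hk : Nat.choose (2 * k) k ≤ min r (M.E.ncard - r)) :
    ∀ B, M.IsBase B → ∃ X Y : Set α, Y ⊆ B ∧ B ⊆ X ∧ X ⊆ M.E ∧
      (X \ Y).ncard = 2 * k ∧
      ∀ B' ⊆ X \ Y, (M.IsBase (B' ∪ Y) ↔ B'.ncard = k) := by
  classical
  intro B hB
  have hBE := hB.subset_ground
  have hBcard : B.ncard = r := hsp.1 B hB
  have hBfin : B.Finite := hfin.subset hBE
  have hkr : Nat.choose (2*k) k ≤ r := le_trans hk (min_le_left _ _)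
  have hknr : Nat.choose (2*k) k ≤ M.E.ncard - r := le_trans hk (min_le_right _ _)
  have hkk := sp_k_le_choose k
  have main : ∀ i, i ≤ k → ∃ P Q : Finset α, ↑P ⊆ B ∧ ↑Q ⊆ M.E \ B ∧
      P.card = i ∧ Q.card = i ∧ GoodPair M B P Q := by
    intro i
    induction i with
    | zero =>
      intro _
      refine ⟨∅, ∅, by simp, by simp, rfl, rfl, ?_⟩
      intro T U hT hU _
      rw [Finset.subset_empty] at hT hU
      subst hT; subst hU
      simpa using hB
    | succ i ih =>
      intro hik
      obtain ⟨P, Q, hP, hQ, hPc, hQc, hg⟩ := ih (by omega)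
      have hbin := sp_binom_aux k i (by omega)
      have hpas : Nat.choose (2*i+1) (i+1) = Nat.choose (2*i) i + Nat.choose (2*i) (i+1) := by
        rw [show 2*i+1 = (2*i)+1 by ring]
        exact Nat.choose_succ_succ (2*i) i
      have hA : Nat.choose (2*i) (i+1) + i < r := by omega
      obtain ⟨y, hyB, hyP, hgy⟩ := sp_stepY hfin hsp hBE hBcard hP hQ hPc hQc hg hA
      have hsymm : Nat.choose (2*i+1) i = Nat.choose (2*i+1) (i+1) := by
        have h := Nat.choose_symm (n := 2*i+1) (k := i+1) (by omega)
        rw [show 2*i+1-(i+1) = i by omega] at h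
        exact h
      have hBnum : Nat.choose (2*i+1) i + i < M.E.ncard - r := by omega
      have h2c := hkk.2 (by omega)
      have h2r : 2 ≤ r := by omega
      have hir : i + 1 ≤ r := by omega
      have hPc' : (insert y P).card = i + 1 := by
        rw [Finset.card_insert_of_notMem hyP, hPc]
      have hP' : ↑(insert y P) ⊆ B := by
        rw [Finset.coe_insert]; exact Set.insert_subset hyB hP
      obtain ⟨x, hxE, hxB, hxQ, hgx⟩ :=
        sp_stepX hfin hsp hBE hBcard hP' hQ hPc' hQc hgy hBnum hir h2r
      refine ⟨insert y P, insert x Q, hP', ?_, hPc', ?_, hgx⟩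
      · rw [Finset.coe_insert]; exact Set.insert_subset ⟨hxE, hxB⟩ hQ
      · rw [Finset.card_insert_of_notMem hxQ, hQc]
  obtain ⟨P, Q, hP, hQ, hPc, hQc, hg⟩ := main k le_rfl
  have hQB : Disjoint (↑Q : Set α) B := by
    rw [Set.disjoint_left]; intro a ha hc; exact (hQ ha).2 hc
  have hPQd : Disjoint (↑P : Set α) ↑Q := by
    rw [Set.disjoint_left]; intro a ha hc; exact (hQ hc).2 (hP ha)
  have hXY : (B ∪ ↑Q) \ (B \ ↑P) = ↑P ∪ ↑Q := by
    rw [Set.union_diff_distrib, Set.diff_diff_cancel_left hP,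
      (hQB.mono_right Set.diff_subset).sdiff_eq_left]
  refine ⟨B ∪ ↑Q, B \ ↑P, Set.diff_subset, Set.subset_union_left, ?_, ?_, ?_⟩
  · exact Set.union_subset hBE (fun a ha => (hQ ha).1)
  · rw [hXY, Set.ncard_union_eq hPQd P.finite_toSet Q.finite_toSet,
      Set.ncard_coe_finset, Set.ncard_coe_finset, hPc, hQc]
    ring
  · intro B' hB'sub
    rw [hXY] at hB'sub
    have hB'fin : B'.Finite := ((P ∪ Q).finite_toSet.subset (by rwa [Finset.coe_union]))
    have hYcard : (B \ ↑P).ncard = r - k := by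
      rw [Set.ncard_diff hP P.finite_toSet, Set.ncard_coe_finset, hPc, hBcard]
    have hdisjBY : Disjoint B' (B \ ↑P) := by
      rw [Set.disjoint_left]
      intro a ha hc
      rcases hB'sub ha with h | h
      · exact hc.2 h
      · exact (hQ h).2 hc.1
    have hkr2 : k ≤ r := le_trans hkk.1 hkr
    constructor
    · intro hbase
      have hc := hsp.1 _ hbase
      rw [Set.ncard_union_eq hdisjBY hB'fin (hBfin.diff), hYcard] at hc
      omega
    · intro hcard
      set B'f : Finset α := hB'fin.toFinset with hB'fdef
      have hcoe : (↑B'f : Set α) = B' := hB'fin.coe_toFinset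
      have hB'fc : B'f.card = k := by rw [← Set.ncard_coe_finset, hcoe, hcard]
      have hB'P : B'f ⊆ P ∪ Q := by
        rw [← Finset.coe_subset, Finset.coe_union, hcoe]; exact hB'sub
      have hcc : (P \ B'f).card = (B'f ∩ Q).card := by
        have h1 := Finset.card_sdiff_add_card_inter P B'f
        have h2 := Finset.card_sdiff_add_card_inter B'f P
        have h3 : B'f ∩ Q = B'f \ P := by
          ext a
          simp only [Finset.mem_inter, Finset.mem_sdiff]
          constructor
          · rintro ⟨h1', h2'⟩
            exact ⟨h1', fun hc => (hQ (Finset.mem_coe.mpr h2')).2 (hP (Finset.mem_coe.mpr hc))⟩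
          · rintro ⟨h1', h2'⟩
            exact ⟨h1', (Finset.mem_union.mp (hB'P h1')).resolve_left h2'⟩
        have h4 : (P ∩ B'f).card = (B'f ∩ P).card := by rw [Finset.inter_comm]
        rw [h3]
        omega
      have hbase := hg (P \ B'f) (B'f ∩ Q) Finset.sdiff_subset Finset.inter_subset_right hcc
      have hsets : (B \ ↑(P \ B'f)) ∪ ↑(B'f ∩ Q) = B' ∪ (B \ ↑P) := by
        rw [Finset.coe_sdiff, Finset.coe_inter, hcoe]
        ext a
        simp only [Set.mem_union, Set.mem_diff, Set.mem_inter_iff]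
        constructor
        · rintro (⟨haB, hnd⟩ | ⟨h1, h2⟩)
          · by_cases haP : a ∈ (↑P : Set α)
            · left
              by_contra hB'
              exact hnd ⟨haP, hB'⟩
            · right; exact ⟨haB, haP⟩
          · left; exact h1
        · rintro (h | ⟨haB, hnP⟩)
          · rcases hB'sub h with hp | hq
            · left
              refine ⟨hP hp, ?_⟩
              rintro ⟨_, hnb⟩
              exact hnb h
            · right; exact ⟨h, hq⟩
          · left
            exact ⟨haB, fun hc => hnP hc.1⟩
      rw [← hsets]
      exact hbase
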